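/- arXiv:2203.13593 — 5 statements merged into one kernel-verified Lean document; each statement's English description precedes it below -/
import Mathlib

section
/- The Toda A_{n−1} classical r-matrix a₁₂ = (1/4) Σ_{i,j=1}^n sgn(i−j) e_{ij} ⊗ e_{ji} satisfies the modified classical Yang–Baxter equation [a₁₂, a₁₃] + [a₁₂, a₂₃] + [a₁₃, a₂₃] = (1/16)(Ω₁₂₃ − Ω₁₂₃^{t₁t₂t₃}), where Ω₁₂₃ = Σ_{i,j,k} e_{ij} ⊗ e_{jk} ⊗ e_{ki}. -/
open Matrix BigOperators
open scoped Kronecker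

/-- Elementary matrix `e_{ij}`. -/
noncomputable def E (n : ℕ) (i j : Fin n) : Matrix (Fin n) (Fin n) ℂ :=
  Matrix.single i j 1

/-- `sgn(i - j)` as a complex number, with `sgn(0) = 0`. -/
def sg (n : ℕ) (i j : Fin n) : ℂ := ((((i : ℤ) - (j : ℤ)).sign : ℤ) : ℂ)

/-- Triple Kronecker product, acting on `(ℂ^n)^{⊗3}`. -/
noncomputable def K3 (n : ℕ) (A B C : Matrix (Fin n) (Fin n) ℂ) :
    Matrix ((Fin n × Fin n) × Fin n) ((Fin n × Fin n) × Fin n) ℂ :=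
  A ⊗ₖ B ⊗ₖ C

/-- Toda r-matrix `a` placed in legs (1,2). -/
noncomputable def a12 (n : ℕ) :
    Matrix ((Fin n × Fin n) × Fin n) ((Fin n × Fin n) × Fin n) ℂ :=
  (1/4 : ℂ) • ∑ i : Fin n, ∑ j : Fin n, sg n i j • K3 n (E n i j) (E n j i) 1

/-- Toda r-matrix `a` placed in legs (1,3). -/
noncomputable def a13 (n : ℕ) :
    Matrix ((Fin n × Fin n) × Fin n) ((Fin n × Fin n) × Fin n) ℂ :=
  (1/4 : ℂ) • ∑ i : Fin n, ∑ j : Fin n, sg n i j • K3 n (E n i j) 1 (E n j i)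

/-- Toda r-matrix `a` placed in legs (2,3). -/
noncomputable def a23 (n : ℕ) :
    Matrix ((Fin n × Fin n) × Fin n) ((Fin n × Fin n) × Fin n) ℂ :=
  (1/4 : ℂ) • ∑ i : Fin n, ∑ j : Fin n, sg n i j • K3 n 1 (E n i j) (E n j i)

/-- `Ω = Σ_{i,j,k} e_{ij} ⊗ e_{jk} ⊗ e_{ki}`. -/
noncomputable def Omega (n : ℕ) :
    Matrix ((Fin n × Fin n) × Fin n) ((Fin n × Fin n) × Fin n) ℂ :=
  ∑ i : Fin n, ∑ j : Fin n, ∑ k : Fin n, K3 n (E n i j) (E n j k) (E n k i)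

/-- `Ω^{t₁t₂t₃} = Σ_{i,j,k} e_{ji} ⊗ e_{kj} ⊗ e_{ik}`. -/
noncomputable def OmegaT (n : ℕ) :
    Matrix ((Fin n × Fin n) × Fin n) ((Fin n × Fin n) × Fin n) ℂ :=
  ∑ i : Fin n, ∑ j : Fin n, ∑ k : Fin n, K3 n (E n j i) (E n k j) (E n i k)

open Matrix BigOperators
open scoped Kronecker

lemma sgn_id (x y : ℤ) (h : ¬(x = 0 ∧ y = 0)) :
    x.sign * (x+y).sign + (x+y).sign * y.sign - x.sign * y.sign = 1 := by
  rcases lt_trichotomy x 0 with hx|hx|hx <;> rcases lt_trichotomy y 0 with hy|hy|hy <;>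
    rcases lt_trichotomy (x+y) 0 with hxy|hxy|hxy <;>
    simp_all [Int.sign_eq_one_of_pos, Int.sign_eq_neg_one_of_neg] <;> omega

lemma sgn_idC (n : ℕ) (p q r : Fin n) (h : ¬(p = q ∧ q = r)) :
    sg n p q * sg n p r + sg n p r * sg n q r - sg n p q * sg n q r = 1 := by
  have hx : ¬(((p:ℤ)-q = 0) ∧ ((q:ℤ)-r = 0)) := by
    rintro ⟨h1, h2⟩
    exact h ⟨Fin.ext (by omega), Fin.ext (by omega)⟩
  have key := sgn_id ((p:ℤ)-q) ((q:ℤ)-r) hx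
  have e1 : ((p:ℤ)-q) + ((q:ℤ)-r) = (p:ℤ)-r := by ring
  rw [e1] at key
  have keyC := congrArg (Int.cast : ℤ → ℂ) key
  push_cast at keyC
  simp only [sg]
  linear_combination keyC

lemma sg_swap (n : ℕ) (p q : Fin n) : sg n q p = - sg n p q := by
  simp only [sg]
  have : ((q:ℤ) - p) = -((p:ℤ) - q) := by ring
  rw [this, Int.sign_neg]
  push_cast
  ring

lemma a12_apply (n : ℕ) (p q r p' q' r' : Fin n) :
    a12 n ((p,q),r) ((p',q'),r') =
      if p' = q ∧ q' = p ∧ r' = r then (1/4 : ℂ) * sg n p q else 0 := by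
  simp only [a12, K3, E, Matrix.smul_apply, Matrix.sum_apply, Matrix.kroneckerMap_apply,
    Matrix.single, Matrix.one_apply, Matrix.of_apply]
  simp [Finset.sum_ite_eq, Finset.sum_ite_eq', mul_ite, ite_and, eq_comm]
  split_ifs <;> simp_all

lemma a13_apply (n : ℕ) (p q r p' q' r' : Fin n) :
    a13 n ((p,q),r) ((p',q'),r') =
      if p' = r ∧ q' = q ∧ r' = p then (1/4 : ℂ) * sg n p r else 0 := by
  simp only [a13, K3, E, Matrix.smul_apply, Matrix.sum_apply, Matrix.kroneckerMap_apply,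
    Matrix.single, Matrix.one_apply, Matrix.of_apply]
  simp [Finset.sum_ite_eq, Finset.sum_ite_eq', mul_ite, ite_and, eq_comm]
  split_ifs <;> simp_all

lemma a23_apply (n : ℕ) (p q r p' q' r' : Fin n) :
    a23 n ((p,q),r) ((p',q'),r') =
      if p' = p ∧ q' = r ∧ r' = q then (1/4 : ℂ) * sg n q r else 0 := by
  simp only [a23, K3, E, Matrix.smul_apply, Matrix.sum_apply, Matrix.kroneckerMap_apply,
    Matrix.single, Matrix.one_apply, Matrix.of_apply]
  simp [Finset.sum_ite_eq, Finset.sum_ite_eq', mul_ite, ite_and, eq_comm]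
  split_ifs <;> simp_all

lemma Omega_apply (n : ℕ) (p q r p' q' r' : Fin n) :
    Omega n ((p,q),r) ((p',q'),r') =
      if p' = q ∧ q' = r ∧ r' = p then (1 : ℂ) else 0 := by
  simp only [Omega, K3, E, Matrix.sum_apply, Matrix.kroneckerMap_apply,
    Matrix.single, Matrix.of_apply]
  simp [Finset.sum_ite_eq, Finset.sum_ite_eq', mul_ite, ite_and, eq_comm]
  split_ifs <;> simp_all

lemma OmegaT_apply (n : ℕ) (p q r p' q' r' : Fin n) :
    OmegaT n ((p,q),r) ((p',q'),r') =
      if p' = r ∧ q' = p ∧ r' = q then (1 : ℂ) else 0 := by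
  simp only [OmegaT, K3, E, Matrix.sum_apply, Matrix.kroneckerMap_apply,
    Matrix.single, Matrix.of_apply]
  simp [Finset.sum_ite_eq, Finset.sum_ite_eq', mul_ite, ite_and, eq_comm]
  split_ifs <;> simp_all
lemma sg_self (n : ℕ) (p : Fin n) : sg n p p = 0 := by simp [sg]

set_option linter.unnecessarySeqFocus false

lemma m1 (n : ℕ) (p q r p' q' r' : Fin n) :
    (a12 n * a13 n) ((p,q),r) ((p',q'),r') =
      if p' = r ∧ q' = p ∧ r' = q then (1/16 : ℂ) * (sg n p q * sg n q r) else 0 := by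
  rw [Matrix.mul_apply, Fintype.sum_prod_type]
  simp only [Fintype.sum_prod_type, a12_apply, a13_apply, ite_mul, mul_ite, zero_mul, mul_zero,
    ite_and]
  simp [Finset.sum_ite_eq, Finset.sum_ite_eq']
  split_ifs <;> simp_all <;> ring

lemma m2 (n : ℕ) (p q r p' q' r' : Fin n) :
    (a13 n * a12 n) ((p,q),r) ((p',q'),r') =
      if p' = q ∧ q' = r ∧ r' = p then (1/16 : ℂ) * (sg n p r * sg n r q) else 0 := by
  rw [Matrix.mul_apply, Fintype.sum_prod_type]
  simp only [Fintype.sum_prod_type, a12_apply, a13_apply, ite_mul, mul_ite, zero_mul, mul_zero,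
    ite_and]
  simp [Finset.sum_ite_eq, Finset.sum_ite_eq']
  split_ifs <;> simp_all <;> ring

lemma m3 (n : ℕ) (p q r p' q' r' : Fin n) :
    (a12 n * a23 n) ((p,q),r) ((p',q'),r') =
      if p' = q ∧ q' = r ∧ r' = p then (1/16 : ℂ) * (sg n p q * sg n p r) else 0 := by
  rw [Matrix.mul_apply, Fintype.sum_prod_type]
  simp only [Fintype.sum_prod_type, a12_apply, a23_apply, ite_mul, mul_ite, zero_mul, mul_zero,
    ite_and]
  simp [Finset.sum_ite_eq, Finset.sum_ite_eq']
  split_ifs <;> simp_all <;> ring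

lemma m4 (n : ℕ) (p q r p' q' r' : Fin n) :
    (a23 n * a12 n) ((p,q),r) ((p',q'),r') =
      if p' = r ∧ q' = p ∧ r' = q then (1/16 : ℂ) * (sg n q r * sg n p r) else 0 := by
  rw [Matrix.mul_apply, Fintype.sum_prod_type]
  simp only [Fintype.sum_prod_type, a12_apply, a23_apply, ite_mul, mul_ite, zero_mul, mul_zero,
    ite_and]
  simp [Finset.sum_ite_eq, Finset.sum_ite_eq']
  split_ifs <;> simp_all <;> ring

lemma m5 (n : ℕ) (p q r p' q' r' : Fin n) :
    (a13 n * a23 n) ((p,q),r) ((p',q'),r') =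
      if p' = r ∧ q' = p ∧ r' = q then (1/16 : ℂ) * (sg n p r * sg n q p) else 0 := by
  rw [Matrix.mul_apply, Fintype.sum_prod_type]
  simp only [Fintype.sum_prod_type, a13_apply, a23_apply, ite_mul, mul_ite, zero_mul, mul_zero,
    ite_and]
  simp [Finset.sum_ite_eq, Finset.sum_ite_eq']
  split_ifs <;> simp_all <;> ring

lemma m6 (n : ℕ) (p q r p' q' r' : Fin n) :
    (a23 n * a13 n) ((p,q),r) ((p',q'),r') =
      if p' = q ∧ q' = r ∧ r' = p then (1/16 : ℂ) * (sg n q r * sg n p q) else 0 := by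
  rw [Matrix.mul_apply, Fintype.sum_prod_type]
  simp only [Fintype.sum_prod_type, a13_apply, a23_apply, ite_mul, mul_ite, zero_mul, mul_zero,
    ite_and]
  simp [Finset.sum_ite_eq, Finset.sum_ite_eq']
  split_ifs <;> simp_all <;> ring
theorem toda_modified_YangBaxter (n : ℕ) :
    (a12 n * a13 n - a13 n * a12 n) + (a12 n * a23 n - a23 n * a12 n) +
      (a13 n * a23 n - a23 n * a13 n)
    = (1/16 : ℂ) • (Omega n - OmegaT n) := by
  ext ⟨⟨p, q⟩, r⟩ ⟨⟨p', q'⟩, r'⟩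
  simp only [Matrix.add_apply, Matrix.sub_apply, Matrix.smul_apply, m1, m2, m3, m4, m5, m6,
    Omega_apply, OmegaT_apply, smul_eq_mul]
  by_cases hA : p' = q ∧ q' = r ∧ r' = p <;> by_cases hB : p' = r ∧ q' = p ∧ r' = q
  · obtain ⟨h1, h2, h3⟩ := hA
    obtain ⟨h4, h5, h6⟩ := hB
    have hqr : q = r := h1 ▸ h4
    have hrp : r = p := h2 ▸ h5
    subst hqr; subst hrp
    simp [sg_self]
  · obtain ⟨h1, h2, h3⟩ := hA
    subst p'; subst q'; subst r'
    have hne : ¬(p = q ∧ q = r) := by rintro ⟨rfl, rfl⟩; exact hB ⟨rfl, rfl, rfl⟩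
    have key := sgn_idC n p q r hne
    simp only [and_self, if_true, if_neg hB, eq_self_iff_true, mul_one, mul_zero, sub_zero,
      zero_sub]
    rw [sg_swap n q r]
    linear_combination (1/16 : ℂ) * key
  · obtain ⟨h1, h2, h3⟩ := hB
    subst p'; subst q'; subst r'
    have hne : ¬(p = q ∧ q = r) := by rintro ⟨rfl, rfl⟩; exact hA ⟨rfl, rfl, rfl⟩
    have key := sgn_idC n p q r hne
    simp only [and_self, if_true, if_neg hA, eq_self_iff_true, mul_one, mul_zero, sub_zero,
      zero_sub]
    rw [sg_swap n p q]
    linear_combination -(1/16 : ℂ) * key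
  · simp [hA, hB]
end

section
/- Let ã₁₂ = a'₁₂ + (1/2)P₁₂ where a'₁₂ = (1/2) Σ_{i,j} sgn(i−j) e_{ij} ⊗ e_{ji} and P₁₂ = Σ_{i,j} e_{ij} ⊗ e_{ji}. Then [ã₁₂, ã₁₃] + [ã₁₂, ã₂₃] + [ã₁₃, ã₂₃] = 0, i.e. ã satisfies the classical Yang–Baxter equation with zero right-hand side. -/
set_option maxRecDepth 10000


open Matrix BigOperators
open scoped Kronecker

/-- `ã = (1/2) Σ sgn(i−j) e_{ij} ⊗ e_{ji} + (1/2) Σ e_{ij} ⊗ e_{ji}` in legs (1,2). -/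
noncomputable def at12 (n : ℕ) :
    Matrix ((Fin n × Fin n) × Fin n) ((Fin n × Fin n) × Fin n) ℂ :=
  (1/2 : ℂ) • ∑ i : Fin n, ∑ j : Fin n, sg n i j • K3 n (E n i j) (E n j i) 1
  + (1/2 : ℂ) • ∑ i : Fin n, ∑ j : Fin n, K3 n (E n i j) (E n j i) 1

/-- The same `ã` placed in legs (1,3). -/
noncomputable def at13 (n : ℕ) :
    Matrix ((Fin n × Fin n) × Fin n) ((Fin n × Fin n) × Fin n) ℂ :=
  (1/2 : ℂ) • ∑ i : Fin n, ∑ j : Fin n, sg n i j • K3 n (E n i j) 1 (E n j i)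
  + (1/2 : ℂ) • ∑ i : Fin n, ∑ j : Fin n, K3 n (E n i j) 1 (E n j i)

/-- The same `ã` placed in legs (2,3). -/
noncomputable def at23 (n : ℕ) :
    Matrix ((Fin n × Fin n) × Fin n) ((Fin n × Fin n) × Fin n) ℂ :=
  (1/2 : ℂ) • ∑ i : Fin n, ∑ j : Fin n, sg n i j • K3 n 1 (E n i j) (E n j i)
  + (1/2 : ℂ) • ∑ i : Fin n, ∑ j : Fin n, K3 n 1 (E n i j) (E n j i)

noncomputable def fv (n : ℕ) (i j : Fin n) : ℂ := (sg n i j + 1)/2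

lemma fv_lt {n : ℕ} {i j : Fin n} (h : i < j) : fv n i j = 0 := by
  have : ((i : ℤ) - (j : ℤ)).sign = -1 :=
    Int.sign_eq_neg_one_of_neg (by have := h; omega)
  simp [fv, sg, this]
lemma fv_self {n : ℕ} (i : Fin n) : fv n i i = 1/2 := by simp [fv, sg]
lemma fv_gt {n : ℕ} {i j : Fin n} (h : j < i) : fv n i j = 1 := by
  have : ((i : ℤ) - (j : ℤ)).sign = 1 :=
    Int.sign_eq_one_of_pos (by have := h; omega)
  simp [fv, sg, this]


lemma key1 {n : ℕ} {a b c : Fin n} (h : ¬(a = b ∧ b = c)) :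
    fv n a b * fv n b c - fv n b c * fv n a c + fv n a c - fv n a c * fv n a b = 0 := by
  rcases lt_trichotomy a b with h1 | h1 | h1 <;>
  rcases lt_trichotomy b c with h2 | h2 | h2 <;>
  rcases lt_trichotomy a c with h3 | h3 | h3 <;>
  first
  | (exfalso; omega)
  | (subst_vars; simp_all [fv_lt, fv_gt, fv_self]; try ring)
  | (simp_all [fv_lt, fv_gt, fv_self]; try ring)

lemma key2 {n : ℕ} {a b c : Fin n} (h : ¬(a = b ∧ b = c)) :
    fv n a b * fv n a c - fv n a c * fv n c b - fv n b c * fv n a b = 0 := by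
  rcases lt_trichotomy a b with h1 | h1 | h1 <;>
  rcases lt_trichotomy b c with h2 | h2 | h2 <;>
  rcases lt_trichotomy a c with h3 | h3 | h3 <;>
  first
  | (exfalso; omega)
  | (subst_vars; simp_all [fv_lt, fv_gt, fv_self]; try ring)
  | (simp_all [fv_lt, fv_gt, fv_self]; try ring)

lemma at12_apply (n : ℕ) (x y : (Fin n × Fin n) × Fin n) :
    at12 n x y = if y = ((x.1.2, x.1.1), x.2) then fv n x.1.1 x.1.2 else 0 := by
  obtain ⟨⟨a, b⟩, c⟩ := x
  obtain ⟨⟨a', b'⟩, c'⟩ := y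
  simp only [at12, K3, E, fv, Matrix.add_apply, Matrix.smul_apply, Matrix.sum_apply,
    Matrix.kroneckerMap_apply, Matrix.single, Matrix.one_apply, smul_eq_mul,
    Matrix.of_apply, Prod.mk.injEq]
  simp only [ite_and, mul_ite, mul_one, mul_zero, ite_mul, zero_mul, one_mul,
    Finset.sum_ite_eq, Finset.mem_univ, if_true]
  by_cases h1 : a' = b <;> by_cases h2 : b' = a <;> by_cases h3 : c' = c <;>
    simp_all <;> ring_nf <;> simp_all [eq_comm]

lemma at13_apply (n : ℕ) (x y : (Fin n × Fin n) × Fin n) :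
    at13 n x y = if y = ((x.2, x.1.2), x.1.1) then fv n x.1.1 x.2 else 0 := by
  obtain ⟨⟨a, b⟩, c⟩ := x
  obtain ⟨⟨a', b'⟩, c'⟩ := y
  simp only [at13, K3, E, fv, Matrix.add_apply, Matrix.smul_apply, Matrix.sum_apply,
    Matrix.kroneckerMap_apply, Matrix.single, Matrix.one_apply, smul_eq_mul,
    Matrix.of_apply, Prod.mk.injEq]
  simp only [ite_and, mul_ite, mul_one, mul_zero, ite_mul, zero_mul, one_mul,
    Finset.sum_ite_eq, Finset.mem_univ, if_true]
  by_cases h1 : a' = c <;> by_cases h2 : b' = b <;> by_cases h3 : c' = a <;>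
    simp_all <;> ring_nf <;> simp_all [eq_comm]

lemma at23_apply (n : ℕ) (x y : (Fin n × Fin n) × Fin n) :
    at23 n x y = if y = ((x.1.1, x.2), x.1.2) then fv n x.1.2 x.2 else 0 := by
  obtain ⟨⟨a, b⟩, c⟩ := x
  obtain ⟨⟨a', b'⟩, c'⟩ := y
  simp only [at23, K3, E, fv, Matrix.add_apply, Matrix.smul_apply, Matrix.sum_apply,
    Matrix.kroneckerMap_apply, Matrix.single, Matrix.one_apply, smul_eq_mul,
    Matrix.of_apply, Prod.mk.injEq]
  simp only [ite_and, mul_ite, mul_one, mul_zero, ite_mul, zero_mul, one_mul,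
    Finset.sum_ite_eq, Finset.mem_univ, if_true]
  by_cases h1 : a' = a <;> by_cases h2 : b' = c <;> by_cases h3 : c' = b <;>
    simp_all <;> ring_nf <;> simp_all [eq_comm]

theorem tilde_a_classical_YangBaxter (n : ℕ) :
    (at12 n * at13 n - at13 n * at12 n) + (at12 n * at23 n - at23 n * at12 n) +
      (at13 n * at23 n - at23 n * at13 n) = 0 := by
  ext x z
  obtain ⟨⟨a, b⟩, c⟩ := x
  simp only [Matrix.add_apply, Matrix.sub_apply, Matrix.zero_apply, Matrix.mul_apply,
    at12_apply, at13_apply, at23_apply, ite_mul, zero_mul,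
    Finset.sum_ite_eq', Finset.mem_univ, if_true]
  have fvsymm : ∀ i j : Fin n, fv n j i = 1 - fv n i j := by
    intro i j
    have h : ((j : ℤ) - (i : ℤ)) = -((i : ℤ) - (j : ℤ)) := by ring
    simp only [fv, sg, h, Int.sign_neg]
    push_cast
    ring
  by_cases hz1 : z = ((c, a), b) <;> by_cases hz2 : z = ((b, c), a)
  · have h1 : (c = b ∧ a = c) ∧ b = a := by
      rw [hz1] at hz2
      simpa [Prod.mk.injEq] using hz2
    obtain ⟨⟨rfl, rfl⟩, -⟩ := h1
    simp [fv_self]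
  · have hne : ¬(a = b ∧ b = c) := by rintro ⟨rfl, rfl⟩; exact hz2 hz1
    have hneq : (((c, a), b) : (Fin n × Fin n) × Fin n) ≠ ((b, c), a) := by
      intro h
      simp only [Prod.mk.injEq] at h
      exact hne ⟨h.2.symm, h.1.1.symm⟩
    subst hz1
    simp only [if_pos rfl, if_neg hneq, ite_true, mul_zero, sub_zero, zero_sub, mul_one]
    rw [fvsymm a b]
    linear_combination key1 hne
  · have hne : ¬(a = b ∧ b = c) := by rintro ⟨rfl, rfl⟩; exact hz1 hz2
    have hneq : (((b, c), a) : (Fin n × Fin n) × Fin n) ≠ ((c, a), b) := by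
      intro h
      simp only [Prod.mk.injEq] at h
      exact hne ⟨h.2, h.1.1⟩
    subst hz2
    simp only [if_pos rfl, if_neg hneq, ite_true, mul_zero, sub_zero, zero_sub]
    linear_combination key2 hne
  · simp [hz1, hz2]
end

section
/- Let T be the n×n matrix with entries T_{ij} = 1 + sgn(i−j) (sgn(0)=0), and let D = diag((−1)¹, (−1)², …, (−1)ⁿ). Then D T D = T^{−1}; in particular T is invertible. -/
open Matrix BigOperators

/-- The matrix `T` with `T_{ij} = 1 + sgn(i − j)` and `sgn(0) = 0`. -/
def Tmat (n : ℕ) : Matrix (Fin n) (Fin n) ℂ :=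
  fun i j => 1 + ((((i : ℤ) - (j : ℤ)).sign : ℤ) : ℂ)

/-- `D = diag((−1)¹, (−1)², …, (−1)ⁿ)`. -/
def Dmat (n : ℕ) : Matrix (Fin n) (Fin n) ℂ :=
  Matrix.diagonal (fun i => (-1 : ℂ) ^ ((i : ℕ) + 1))

lemma Tmat_apply {n : ℕ} (i j : Fin n) :
    Tmat n i j = if (j:ℕ) < (i:ℕ) then 2 else if (i:ℕ) = (j:ℕ) then 1 else 0 := by
  unfold Tmat
  rcases lt_trichotomy (j:ℕ) (i:ℕ) with h | h | h
  · rw [if_pos h]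
    have : ((i:ℤ) - (j:ℤ)).sign = 1 := Int.sign_eq_one_of_pos (by omega)
    rw [this]; norm_num
  · have : ((i:ℤ) - (j:ℤ)).sign = 0 := by rw [Int.sign_eq_zero_iff_zero]; omega
    rw [this, if_neg (by omega), if_pos (by omega)]; norm_num
  · have : ((i:ℤ) - (j:ℤ)).sign = -1 := Int.sign_eq_neg_one_of_neg (by omega)
    rw [this, if_neg (by omega), if_neg (by omega)]; norm_num

lemma key (n : ℕ) : (Tmat n * Dmat n) * (Tmat n * Dmat n) = 1 := by
  ext i k
  rw [Matrix.mul_apply]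
  have hD : ∀ (a b : Fin n), (Tmat n * Dmat n) a b
      = Tmat n a b * (-1:ℂ)^((b:ℕ)+1) := by
    intro a b; rw [Dmat, Matrix.mul_diagonal]
  simp only [hD]
  by_cases hik : i = k
  · subst hik
    rw [Finset.sum_eq_single i]
    · simp only [Tmat_apply, lt_self_iff_false, if_false, if_pos rfl, if_true, one_mul,
        one_apply_eq]
      rw [← pow_add, show ((i:ℕ)+1)+((i:ℕ)+1) = 2*((i:ℕ)+1) by ring, pow_mul]
      norm_num
    · intro j _ hj
      have hji : (j:ℕ) ≠ (i:ℕ) := fun h => hj (Fin.ext h)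
      rw [Tmat_apply, Tmat_apply]
      rcases lt_or_gt_of_ne hji with h | h
      · rw [if_neg (show ¬ (i:ℕ) < (j:ℕ) by omega),
          if_neg (show ¬ (j:ℕ) = (i:ℕ) from hji)]; ring
      · rw [if_neg (show ¬ (j:ℕ) < (i:ℕ) by omega),
          if_neg (show ¬ (i:ℕ) = (j:ℕ) by omega)]; ring
    · simp
  · have hIK : (i:ℕ) ≠ (k:ℕ) := fun h => hik (Fin.ext h)
    rw [one_apply_ne hik]
    set I := (i:ℕ) with hI
    set K := (k:ℕ) with hK
    set G : ℕ → ℂ := fun j =>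
      (-1:ℂ)^j * (if K < j ∧ j ≤ I then 2 else 0) * (-1:ℂ)^(K+1) with hG
    have hpt : ∀ j : Fin n,
        Tmat n i j * (-1:ℂ)^((j:ℕ)+1) * (Tmat n j k * (-1:ℂ)^(K+1))
        = G ((j:ℕ)+1) - G (j:ℕ) := by
      intro j
      rw [Tmat_apply, Tmat_apply, hG]
      simp only
      split_ifs <;> first | omega | (simp [pow_succ]; try ring)
    calc (∑ j : Fin n, Tmat n i j * (-1:ℂ)^((j:ℕ)+1) * (Tmat n j k * (-1:ℂ)^(K+1)))
        = ∑ j : Fin n, (G ((j:ℕ)+1) - G (j:ℕ)) := by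
          exact Finset.sum_congr rfl (fun j _ => hpt j)
      _ = ∑ j ∈ Finset.range n, (G (j+1) - G j) :=
          Fin.sum_univ_eq_sum_range (fun j => G (j+1) - G j) n
      _ = G n - G 0 := Finset.sum_range_sub G n
      _ = 0 := by
          rw [hG]; simp only
          rw [if_neg (by omega), if_neg (by omega)]
          ring

theorem DTD_eq_T_inv (n : ℕ) :
    Dmat n * Tmat n * Dmat n = (Tmat n)⁻¹ ∧ IsUnit (Tmat n) := by
  have h1 : Tmat n * (Dmat n * Tmat n * Dmat n) = 1 := by
    have h := key n
    calc Tmat n * (Dmat n * Tmat n * Dmat n)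
        = (Tmat n * Dmat n) * (Tmat n * Dmat n) := by
          rw [Matrix.mul_assoc, Matrix.mul_assoc]
      _ = 1 := h
  constructor
  · exact (Matrix.inv_eq_right_inv h1).symm
  · exact (Matrix.isUnit_iff_isUnit_det _).mpr (Matrix.isUnit_det_of_right_inverse h1)
end

section
/- Let a, b, c, d be two-site structure matrices with c₁₂ = b₂₁ satisfying, for every diagonal matrix D: a commutes with D⊗D, d commutes with D⊗D, (D⊗I) b (I⊗D) = (I⊗D) b (D⊗I), and (D⊗I) c (I⊗D) = (I⊗D) c (D⊗I). If an n×n matrix γ solves the dual classical reflection equation γ₁γ₂ a − d γ₁γ₂ + γ₂ b γ₁ − γ₁ c γ₂ = 0 (with γ₁ = γ⊗I, γ₂ = I⊗γ), then for every diagonal matrix D the matrix DγD also solves it. -/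
open Matrix BigOperators
open scoped Kronecker

/-- The permutation operator `P = Σ_{i,j} e_{ij} ⊗ e_{ji}`. -/
noncomputable def Pmat (n : ℕ) : Matrix (Fin n × Fin n) (Fin n × Fin n) ℂ :=
  ∑ i : Fin n, ∑ j : Fin n, E n i j ⊗ₖ E n j i

/-- For a two-site matrix `x₁₂`, the flipped matrix `x₂₁ = P x₁₂ P`. -/
noncomputable def swap (n : ℕ) (x : Matrix (Fin n × Fin n) (Fin n × Fin n) ℂ) :
    Matrix (Fin n × Fin n) (Fin n × Fin n) ℂ :=
  Pmat n * x * Pmat n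

/-- The dual classical reflection equation
`γ₁ γ₂ a − d γ₁ γ₂ + γ₂ b γ₁ − γ₁ c γ₂ = 0`, with `γ₁ = γ ⊗ I`, `γ₂ = I ⊗ γ`. -/
noncomputable def SolvesRE (n : ℕ)
    (a b c dm : Matrix (Fin n × Fin n) (Fin n × Fin n) ℂ)
    (γ : Matrix (Fin n) (Fin n) ℂ) : Prop :=
  let γ₁ := γ ⊗ₖ (1 : Matrix (Fin n) (Fin n) ℂ)
  let γ₂ := (1 : Matrix (Fin n) (Fin n) ℂ) ⊗ₖ γ
  γ₁ * γ₂ * a - dm * (γ₁ * γ₂) + γ₂ * b * γ₁ - γ₁ * c * γ₂ = 0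

theorem reflection_solution_diagonal_dressing (n : ℕ)
    (a b c dm : Matrix (Fin n × Fin n) (Fin n × Fin n) ℂ)
    (hc : c = swap n b)
    (hA : ∀ d : Fin n → ℂ,
      a * (Matrix.diagonal d ⊗ₖ Matrix.diagonal d)
        = (Matrix.diagonal d ⊗ₖ Matrix.diagonal d) * a)
    (hD : ∀ d : Fin n → ℂ,
      dm * (Matrix.diagonal d ⊗ₖ Matrix.diagonal d)
        = (Matrix.diagonal d ⊗ₖ Matrix.diagonal d) * dm)
    (hB : ∀ d : Fin n → ℂ,
      (Matrix.diagonal d ⊗ₖ (1 : Matrix (Fin n) (Fin n) ℂ)) * b *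
          ((1 : Matrix (Fin n) (Fin n) ℂ) ⊗ₖ Matrix.diagonal d)
        = ((1 : Matrix (Fin n) (Fin n) ℂ) ⊗ₖ Matrix.diagonal d) * b *
          (Matrix.diagonal d ⊗ₖ (1 : Matrix (Fin n) (Fin n) ℂ)))
    (hC : ∀ d : Fin n → ℂ,
      (Matrix.diagonal d ⊗ₖ (1 : Matrix (Fin n) (Fin n) ℂ)) * c *
          ((1 : Matrix (Fin n) (Fin n) ℂ) ⊗ₖ Matrix.diagonal d)
        = ((1 : Matrix (Fin n) (Fin n) ℂ) ⊗ₖ Matrix.diagonal d) * c *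
          (Matrix.diagonal d ⊗ₖ (1 : Matrix (Fin n) (Fin n) ℂ)))
    (γ : Matrix (Fin n) (Fin n) ℂ)
    (hγ : SolvesRE n a b c dm γ)
    (d : Fin n → ℂ) :
    SolvesRE n a b c dm (Matrix.diagonal d * γ * Matrix.diagonal d) := by
  have hA' := hA d
  have hD' := hD d
  have hB' := hB d
  have hC' := hC d
  simp only [SolvesRE] at hγ ⊢
  set D := Matrix.diagonal d with hDdef
  set g1 := γ ⊗ₖ (1 : Matrix (Fin n) (Fin n) ℂ) with hg1def
  set g2 := (1 : Matrix (Fin n) (Fin n) ℂ) ⊗ₖ γ with hg2def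
  set D1 := D ⊗ₖ (1 : Matrix (Fin n) (Fin n) ℂ) with hD1def
  set D2 := (1 : Matrix (Fin n) (Fin n) ℂ) ⊗ₖ D with hD2def
  set Dd := D ⊗ₖ D with hDddef
  have h12 : D1 * D2 = Dd := by
    simp only [hD1def, hD2def, hDddef, ← Matrix.mul_kronecker_mul, one_mul, mul_one]
  have h21 : D2 * D1 = Dd := by
    simp only [hD1def, hD2def, hDddef, ← Matrix.mul_kronecker_mul, one_mul, mul_one]
  have hc1 : D1 * g2 = g2 * D1 := by
    simp only [hD1def, hg2def, ← Matrix.mul_kronecker_mul, one_mul, mul_one]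
  have hc2 : D2 * g1 = g1 * D2 := by
    simp only [hD2def, hg1def, ← Matrix.mul_kronecker_mul, one_mul, mul_one]
  have hg1k : (D * γ * D) ⊗ₖ (1 : Matrix (Fin n) (Fin n) ℂ) = D1 * g1 * D1 := by
    simp only [hD1def, hg1def, ← Matrix.mul_kronecker_mul, one_mul, mul_one]
  have hg2k : (1 : Matrix (Fin n) (Fin n) ℂ) ⊗ₖ (D * γ * D) = D2 * g2 * D2 := by
    simp only [hD2def, hg2def, ← Matrix.mul_kronecker_mul, one_mul, mul_one]
  have A1 : D1 * g1 * D1 * (D2 * g2 * D2) = Dd * (g1 * g2) * Dd := by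
    calc D1 * g1 * D1 * (D2 * g2 * D2)
        = D1 * g1 * (D1 * D2) * (g2 * D2) := by simp only [mul_assoc]
      _ = D1 * g1 * (D2 * D1) * (g2 * D2) := by rw [h12, ← h21]
      _ = D1 * (g1 * D2) * ((D1 * g2) * D2) := by simp only [mul_assoc]
      _ = D1 * (D2 * g1) * ((g2 * D1) * D2) := by rw [← hc2, hc1]
      _ = (D1 * D2) * (g1 * g2) * (D1 * D2) := by simp only [mul_assoc]
      _ = Dd * (g1 * g2) * Dd := by rw [h12]
  have A3 : D2 * g2 * D2 * b * (D1 * g1 * D1) = Dd * (g2 * b * g1) * Dd := by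
    calc D2 * g2 * D2 * b * (D1 * g1 * D1)
        = D2 * g2 * (D2 * b * D1) * (g1 * D1) := by simp only [mul_assoc]
      _ = D2 * g2 * (D1 * b * D2) * (g1 * D1) := by rw [← hB']
      _ = D2 * (g2 * D1) * b * ((D2 * g1) * D1) := by simp only [mul_assoc]
      _ = D2 * (D1 * g2) * b * ((g1 * D2) * D1) := by rw [← hc1, hc2]
      _ = (D2 * D1) * (g2 * b * g1) * (D2 * D1) := by simp only [mul_assoc]
      _ = Dd * (g2 * b * g1) * Dd := by rw [h21]
  have A4 : D1 * g1 * D1 * c * (D2 * g2 * D2) = Dd * (g1 * c * g2) * Dd := by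
    calc D1 * g1 * D1 * c * (D2 * g2 * D2)
        = D1 * g1 * (D1 * c * D2) * (g2 * D2) := by simp only [mul_assoc]
      _ = D1 * g1 * (D2 * c * D1) * (g2 * D2) := by rw [hC']
      _ = D1 * (g1 * D2) * c * ((D1 * g2) * D2) := by simp only [mul_assoc]
      _ = D1 * (D2 * g1) * c * ((g2 * D1) * D2) := by rw [← hc2, hc1]
      _ = (D1 * D2) * (g1 * c * g2) * (D1 * D2) := by simp only [mul_assoc]
      _ = Dd * (g1 * c * g2) * Dd := by rw [h12]
  have e1 : Dd * (g1 * g2) * Dd * a = Dd * (g1 * g2 * a) * Dd := by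
    calc Dd * (g1 * g2) * Dd * a
        = Dd * (g1 * g2) * (Dd * a) := by simp only [mul_assoc]
      _ = Dd * (g1 * g2) * (a * Dd) := by rw [← hA']
      _ = Dd * (g1 * g2 * a) * Dd := by simp only [mul_assoc]
  have e2 : dm * (Dd * (g1 * g2) * Dd) = Dd * (dm * (g1 * g2)) * Dd := by
    calc dm * (Dd * (g1 * g2) * Dd)
        = (dm * Dd) * ((g1 * g2) * Dd) := by simp only [mul_assoc]
      _ = (Dd * dm) * ((g1 * g2) * Dd) := by rw [hD']
      _ = Dd * (dm * (g1 * g2)) * Dd := by simp only [mul_assoc]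
  rw [hg1k, hg2k, A1, A3, A4, e1, e2, ← sub_mul, ← add_mul, ← sub_mul,
    ← mul_sub, ← mul_add, ← mul_sub, hγ, mul_zero, zero_mul]
end

section
/- Let p₁,…,pₙ and q₁,…,qₙ be real numbers with the q_i pairwise distinct, T_{ij} = 1 + sgn(q_i−q_j), E_{ij} = e^{−|q_i−q_j|}, P = diag(p₁,…,pₙ), and define the Novikov Lax matrix L^N = T P E P. Let L^{CH} be the matrix with entries (L^{CH})_{ij} = √(p̄_i p̄_j) e^{−|q̄_i−q̄_j|/2} where p̄_i = p_i² and q̄_i = 2q_i (assuming all p_i > 0). Then L^N = T̄ L^{CH}, where T̄_{ij} = 1 + sgn(q̄_i−q̄_j) = T_{ij}. -/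
open Matrix BigOperators Real

theorem novikov_Lax_is_twisted_CH (n : ℕ) (p q : Fin n → ℝ)
    (hp : ∀ i, 0 < p i) (hq : ∀ i j, i ≠ j → q i ≠ q j) :
    let T : Matrix (Fin n) (Fin n) ℝ := fun i j => 1 + Real.sign (q i - q j)
    let Emat : Matrix (Fin n) (Fin n) ℝ := fun i j => Real.exp (-(|q i - q j|))
    let Pm : Matrix (Fin n) (Fin n) ℝ := Matrix.diagonal p
    let LN : Matrix (Fin n) (Fin n) ℝ := T * Pm * Emat * Pm
    let pbar : Fin n → ℝ := fun i => (p i) ^ 2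
    let qbar : Fin n → ℝ := fun i => 2 * q i
    let LCH : Matrix (Fin n) (Fin n) ℝ :=
      fun i j => Real.sqrt (pbar i * pbar j) * Real.exp (-(|qbar i - qbar j|) / 2)
    let Tbar : Matrix (Fin n) (Fin n) ℝ :=
      fun i j => 1 + Real.sign (qbar i - qbar j)
    LN = Tbar * LCH ∧ Tbar = T := by
  intro T Emat Pm LN pbar qbar LCH Tbar
  have hsign : ∀ x : ℝ, Real.sign (2 * x) = Real.sign x := by
    intro x
    rcases lt_trichotomy x 0 with h | h | h
    · rw [Real.sign_of_neg h, Real.sign_of_neg (by linarith)]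
    · simp [h]
    · rw [Real.sign_of_pos h, Real.sign_of_pos (by linarith)]
  have hTbar : Tbar = T := by
    funext i j
    show 1 + Real.sign (2 * q i - 2 * q j) = 1 + Real.sign (q i - q j)
    rw [show 2 * q i - 2 * q j = 2 * (q i - q j) by ring, hsign]
  refine ⟨?_, hTbar⟩
  have hL : LCH = Pm * Emat * Pm := by
    funext i j
    show Real.sqrt ((p i)^2 * (p j)^2) * Real.exp (-(|2 * q i - 2 * q j|) / 2)
        = (Pm * Emat * Pm) i j
    rw [Matrix.mul_diagonal, Matrix.diagonal_mul]
    have h1 : Real.sqrt ((p i)^2 * (p j)^2) = p i * p j := by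
      rw [← mul_pow, Real.sqrt_sq (mul_nonneg (hp i).le (hp j).le)]
    have h2 : -(|2 * q i - 2 * q j|) / 2 = -(|q i - q j|) := by
      rw [show 2 * q i - 2 * q j = 2 * (q i - q j) by ring, abs_mul]
      simp [abs_of_nonneg]
      ring
    rw [h1, h2]
    show p i * p j * Real.exp (-(|q i - q j|)) = p i * Real.exp (-(|q i - q j|)) * p j
    ring
  rw [hTbar, hL]
  show T * Pm * Emat * Pm = _
  rw [Matrix.mul_assoc T Pm Emat, Matrix.mul_assoc T (Pm * Emat) Pm]
end
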